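/- arXiv:1907.09622 — 10 statements merged into one kernel-verified Lean document; each statement's English description precedes it below -/
import Mathlib

section
/- Let M be a monoid with identity e, K a field, μ₁, μ₂, μ₃, μ₄ : M → K distinct nonzero multiplicative functions, and b₁, b₂, b₃, b₄ ∈ K all nonzero. Set g₁ = b₁μ₁ + b₂μ₂ and g₂ = b₃μ₃ + b₄μ₄. If f, h₁, h₂ : M → K satisfy f(xy) = g₁(x)h₁(y) + g₂(x)h₂(y) for all x, y ∈ M, then f = 0, h₁ = 0, and h₂ = 0. -/
private lemma indep4 {M : Type*} [Monoid M] {K : Type*} [Field K]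
    (φ₁ φ₂ φ₃ φ₄ : M →* K)
    (hd₁₂ : φ₁ ≠ φ₂) (hd₁₃ : φ₁ ≠ φ₃) (hd₁₄ : φ₁ ≠ φ₄)
    (hd₂₃ : φ₂ ≠ φ₃) (hd₂₄ : φ₂ ≠ φ₄) (hd₃₄ : φ₃ ≠ φ₄)
    (c₁ c₂ c₃ c₄ : K)
    (h : ∀ x, c₁ * φ₁ x + c₂ * φ₂ x + c₃ * φ₃ x + c₄ * φ₄ x = 0) :
    c₁ = 0 ∧ c₂ = 0 ∧ c₃ = 0 ∧ c₄ = 0 := by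
  set ν : Fin 4 → (M →* K) := ![φ₁, φ₂, φ₃, φ₄] with hν
  have hinj : Function.Injective ν := by
    intro i j hij
    fin_cases i <;> fin_cases j <;> simp_all [ν]
  have hli : LinearIndependent K (fun i => ((ν i : M →* K) : M → K)) :=
    (linearIndependent_monoidHom M K).comp ν hinj
  set c : Fin 4 → K := ![c₁, c₂, c₃, c₄] with hc
  have := Fintype.linearIndependent_iff.mp hli c ?_
  · exact ⟨this 0, this 1, this 2, this 3⟩
  · funext x
    have := h x
    simp only [Fin.sum_univ_four, ν, c, Pi.add_apply, Pi.smul_apply, Pi.zero_apply,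
      Matrix.cons_val_zero, Matrix.cons_val_one, Matrix.head_cons, smul_eq_mul,
      Matrix.cons_val_two, Matrix.cons_val_three, Matrix.tail_cons]
    linear_combination h x

/-- Degenerate Levi-Civita equation with `g₁ = b₁μ₁ + b₂μ₂`, `g₂ = b₃μ₃ + b₄μ₄`:
the only solution is the trivial one. -/
theorem stmt_2 {M : Type*} [Monoid M] {K : Type*} [Field K]
    (μ₁ μ₂ μ₃ μ₄ : M → K)
    (hmul₁ : ∀ x y, μ₁ (x * y) = μ₁ x * μ₁ y)
    (hmul₂ : ∀ x y, μ₂ (x * y) = μ₂ x * μ₂ y)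
    (hmul₃ : ∀ x y, μ₃ (x * y) = μ₃ x * μ₃ y)
    (hmul₄ : ∀ x y, μ₄ (x * y) = μ₄ x * μ₄ y)
    (hne₁ : μ₁ ≠ 0) (hne₂ : μ₂ ≠ 0) (hne₃ : μ₃ ≠ 0) (hne₄ : μ₄ ≠ 0)
    (hd₁₂ : μ₁ ≠ μ₂) (hd₁₃ : μ₁ ≠ μ₃) (hd₁₄ : μ₁ ≠ μ₄)
    (hd₂₃ : μ₂ ≠ μ₃) (hd₂₄ : μ₂ ≠ μ₄) (hd₃₄ : μ₃ ≠ μ₄)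
    (b₁ b₂ b₃ b₄ : K)
    (hb₁ : b₁ ≠ 0) (hb₂ : b₂ ≠ 0) (hb₃ : b₃ ≠ 0) (hb₄ : b₄ ≠ 0)
    (f h₁ h₂ : M → K)
    (heq : ∀ x y, f (x * y) =
      (b₁ * μ₁ x + b₂ * μ₂ x) * h₁ y + (b₃ * μ₃ x + b₄ * μ₄ x) * h₂ y) :
    f = 0 ∧ h₁ = 0 ∧ h₂ = 0 := by
  -- each μᵢ maps 1 to 1
  have one_of : ∀ (μ : M → K), (∀ x y, μ (x * y) = μ x * μ y) → μ ≠ 0 → μ 1 = 1 := by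
    intro μ hm hne
    obtain ⟨a, ha⟩ := Function.ne_iff.mp hne
    have ha' : μ a ≠ 0 := ha
    apply mul_left_cancel₀ ha'
    rw [← hm a 1, mul_one, mul_one]
  have h11 := one_of μ₁ hmul₁ hne₁
  have h21 := one_of μ₂ hmul₂ hne₂
  have h31 := one_of μ₃ hmul₃ hne₃
  have h41 := one_of μ₄ hmul₄ hne₄
  set φ₁ : M →* K := ⟨⟨μ₁, h11⟩, fun x y => hmul₁ x y⟩ with hφ₁
  set φ₂ : M →* K := ⟨⟨μ₂, h21⟩, fun x y => hmul₂ x y⟩ with hφ₂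
  set φ₃ : M →* K := ⟨⟨μ₃, h31⟩, fun x y => hmul₃ x y⟩ with hφ₃
  set φ₄ : M →* K := ⟨⟨μ₄, h41⟩, fun x y => hmul₄ x y⟩ with hφ₄
  have hdφ : ∀ (φ ψ : M →* K), (φ : M → K) ≠ (ψ : M → K) → φ ≠ ψ := by
    intro φ ψ h hcon; exact h (by rw [hcon])
  have key : ∀ y z,
      b₁ * (h₁ (y * z) - μ₁ y * h₁ z) = 0 ∧
      b₂ * (h₁ (y * z) - μ₂ y * h₁ z) = 0 ∧
      b₃ * (h₂ (y * z) - μ₃ y * h₂ z) = 0 ∧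
      b₄ * (h₂ (y * z) - μ₄ y * h₂ z) = 0 := by
    intro y z
    apply indep4 φ₁ φ₂ φ₃ φ₄ (hdφ _ _ hd₁₂) (hdφ _ _ hd₁₃) (hdφ _ _ hd₁₄)
      (hdφ _ _ hd₂₃) (hdφ _ _ hd₂₄) (hdφ _ _ hd₃₄)
    intro x
    have e1 : f (x * (y * z)) = f (x * y * z) := by rw [mul_assoc]
    rw [heq x (y * z), heq (x * y) z, hmul₁, hmul₂, hmul₃, hmul₄] at e1
    show b₁ * (h₁ (y*z) - μ₁ y * h₁ z) * μ₁ x + b₂ * (h₁ (y*z) - μ₂ y * h₁ z) * μ₂ x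
      + b₃ * (h₂ (y*z) - μ₃ y * h₂ z) * μ₃ x + b₄ * (h₂ (y*z) - μ₄ y * h₂ z) * μ₄ x = 0
    linear_combination e1
  -- h₁ = 0
  have hh₁ : h₁ = 0 := by
    obtain ⟨y, hy⟩ := Function.ne_iff.mp hd₁₂
    funext z
    have k1 := (key y z).1
    have k2 := (key y z).2.1
    have e1 : h₁ (y * z) = μ₁ y * h₁ z := by
      rcases mul_eq_zero.mp k1 with h | h
      · exact absurd h hb₁
      · exact sub_eq_zero.mp h
    have e2 : h₁ (y * z) = μ₂ y * h₁ z := by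
      rcases mul_eq_zero.mp k2 with h | h
      · exact absurd h hb₂
      · exact sub_eq_zero.mp h
    have : (μ₁ y - μ₂ y) * h₁ z = 0 := by linear_combination e2 - e1
    rcases mul_eq_zero.mp this with h | h
    · exact absurd (sub_eq_zero.mp h) hy
    · exact h
  have hh₂ : h₂ = 0 := by
    obtain ⟨y, hy⟩ := Function.ne_iff.mp hd₃₄
    funext z
    have k3 := (key y z).2.2.1
    have k4 := (key y z).2.2.2
    have e1 : h₂ (y * z) = μ₃ y * h₂ z := by
      rcases mul_eq_zero.mp k3 with h | h
      · exact absurd h hb₃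
      · exact sub_eq_zero.mp h
    have e2 : h₂ (y * z) = μ₄ y * h₂ z := by
      rcases mul_eq_zero.mp k4 with h | h
      · exact absurd h hb₄
      · exact sub_eq_zero.mp h
    have : (μ₃ y - μ₄ y) * h₂ z = 0 := by linear_combination e2 - e1
    rcases mul_eq_zero.mp this with h | h
    · exact absurd (sub_eq_zero.mp h) hy
    · exact h
  refine ⟨?_, hh₁, hh₂⟩
  funext x
  have := heq x 1
  rw [mul_one] at this
  simp [hh₁, hh₂] at this
  simpa using this
end

section
/- Let M be a monoid with identity e and K a field. Let μ₁,...,μₘ : M → K be distinct nonzero multiplicative functions, b₁,...,bₘ ∈ K all nonzero, and let J : {1,...,m} → {1,...,n} be a surjective function such that each fiber J⁻¹({j}) has at least 2 elements. If f, h₁,...,hₙ : M → K satisfy f(xy) = Σᵢ₌₁ᵐ bᵢ μᵢ(x) h_{J(i)}(y) for all x, y ∈ M, then f = 0 and hⱼ = 0 for all j ∈ {1,...,n}. -/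
/-- Degenerate Levi-Civita equation `f(xy) = Σᵢ bᵢ μᵢ(x) h_{J(i)}(y)` where each fiber
of the surjection `J` has at least 2 elements: the only solution is trivial. -/
theorem stmt_3 {M : Type*} [Monoid M] {K : Type*} [Field K] {m n : ℕ}
    (μ : Fin m → M → K)
    (hmul : ∀ i, ∀ x y : M, μ i (x * y) = μ i x * μ i y)
    (hdist : Function.Injective μ) (hne : ∀ i, μ i ≠ 0)
    (b : Fin m → K) (hb : ∀ i, b i ≠ 0)
    (J : Fin m → Fin n) (hJsurj : Function.Surjective J)
    (hfib : ∀ j, 2 ≤ (Finset.univ.filter fun i => J i = j).card)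
    (f : M → K) (h : Fin n → M → K)
    (heq : ∀ x y, f (x * y) = ∑ i, b i * μ i x * h (J i) y) :
    f = 0 ∧ ∀ j, h j = 0 := by
  -- each μ i sends 1 to 1
  have hone : ∀ i, μ i 1 = 1 := by
    intro i
    by_contra hne1
    have h1 : μ i 1 = μ i 1 * μ i 1 := by rw [← hmul i 1 1, one_mul]
    have h0 : μ i 1 = 0 := by
      have h2 : μ i 1 * (μ i 1 - 1) = 0 := by rw [mul_sub, ← h1]; ring
      rcases mul_eq_zero.mp h2 with h' | h'
      · exact h'
      · exact absurd (sub_eq_zero.mp h') hne1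
    apply hne i
    funext x
    have := hmul i x 1
    rw [mul_one, h0, mul_zero] at this
    exact this
  -- μ's as monoid homs
  let φ : Fin m → (M →* K) := fun i => ⟨⟨μ i, hone i⟩, fun x y => hmul i x y⟩
  have hφinj : Function.Injective φ := by
    intro i j hij
    apply hdist
    funext x
    exact congrFun (congrArg (fun g : M →* K => (g : M → K)) hij) x
  have hLI : LinearIndependent K μ := by
    have := (linearIndependent_monoidHom M K).comp φ hφinj
    exact this
  -- the key cancellation
  have key : ∀ i (y z : M), h (J i) (y * z) = μ i y * h (J i) z := by
    intro i y z
    have hsum : ∀ x : M,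
        ∑ k, (b k * (h (J k) (y * z) - μ k y * h (J k) z)) * μ k x = 0 := by
      intro x
      have e1 := heq x (y * z)
      have e2 := heq (x * y) z
      rw [mul_assoc] at e2
      have : ∑ k, b k * μ k x * h (J k) (y * z)
           = ∑ k, b k * (μ k x * μ k y) * h (J k) z := by
        rw [← e1, e2]
        exact Finset.sum_congr rfl fun k _ => by rw [hmul k x y]
      calc ∑ k, (b k * (h (J k) (y * z) - μ k y * h (J k) z)) * μ k x
          = ∑ k, (b k * μ k x * h (J k) (y * z) - b k * (μ k x * μ k y) * h (J k) z) := by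
            exact Finset.sum_congr rfl fun k _ => by ring
        _ = 0 := by rw [Finset.sum_sub_distrib, this, sub_self]
    have := Fintype.linearIndependent_iff.mp hLI
      (fun k => b k * (h (J k) (y * z) - μ k y * h (J k) z)) ?_ i
    · have hzero : h (J i) (y * z) - μ i y * h (J i) z = 0 := by
        rcases mul_eq_zero.mp this with h' | h'
        · exact absurd h' (hb i)
        · exact h'
      rw [sub_eq_zero] at hzero
      exact hzero
    · funext x
      simpa [Finset.sum_apply] using hsum x
  have hh : ∀ j, h j = 0 := by
    intro j
    obtain ⟨i, i', hii', hJi, hJi'⟩ : ∃ i i', i ≠ i' ∧ J i = j ∧ J i' = j := by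
      obtain ⟨a, c, ha, hc, hac⟩ := Finset.one_lt_card_iff.mp (hfib j)
      simp only [Finset.mem_filter] at ha hc
      exact ⟨a, c, hac, ha.2, hc.2⟩
    have hμne : μ i ≠ μ i' := fun hh => hii' (hdist hh)
    obtain ⟨y, hy⟩ : ∃ y, μ i y ≠ μ i' y := by
      by_contra hall
      push_neg at hall
      exact hμne (funext hall)
    funext z
    have k1 := key i y z
    have k2 := key i' y z
    rw [hJi] at k1; rw [hJi'] at k2
    have : (μ i y - μ i' y) * h j z = 0 := by rw [sub_mul, ← k1, ← k2, sub_self]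
    rcases mul_eq_zero.mp this with h' | h'
    · exact absurd (sub_eq_zero.mp h') hy
    · exact h'
  refine ⟨?_, hh⟩
  funext x
  have := heq x 1
  rw [mul_one] at this
  simp only [Pi.zero_apply]
  rw [this]
  apply Finset.sum_eq_zero
  intro k _
  rw [hh (J k)]
  simp
end

section
/- Let M be a monoid, K a field, μ₁,...,μₘ : M → K distinct nonzero multiplicative functions, b₁,...,bₘ ∈ K all nonzero, and J : {1,...,m} → {1,...,n} a surjection whose fibers all have at least 2 elements. Suppose f, g, h, h₁,...,hₙ : M → K satisfy f(xy) = g(x)h(y) + Σᵢ₌₁ᵐ bᵢμᵢ(x)h_{J(i)}(y) for all x, y ∈ M, with f ≠ 0. If the set {g, μ₁,...,μₘ} is linearly independent over K, then the set {f, μ₁,...,μₘ} is also linearly independent over K. -/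
/-- If `(f,g,h,h₁,…,hₙ)` solves the Levi-Civita equation with `f ≠ 0` and
`{g, μ₁,…,μₘ}` linearly independent, then `{f, μ₁,…,μₘ}` is linearly independent. -/
theorem stmt_4 {M : Type*} [Monoid M] {K : Type*} [Field K] {m n : ℕ}
    (μ : Fin m → M → K)
    (hmul : ∀ i, ∀ x y : M, μ i (x * y) = μ i x * μ i y)
    (hdist : Function.Injective μ) (hne : ∀ i, μ i ≠ 0)
    (b : Fin m → K) (hb : ∀ i, b i ≠ 0)
    (J : Fin m → Fin n) (hJsurj : Function.Surjective J)
    (hfib : ∀ j, 2 ≤ (Finset.univ.filter fun i => J i = j).card)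
    (f g h : M → K) (h' : Fin n → M → K)
    (heq : ∀ x y, f (x * y) = g x * h y + ∑ i, b i * μ i x * h' (J i) y)
    (hf : f ≠ 0)
    (hgind : LinearIndependent K (Fin.cons g μ : Fin (m + 1) → M → K)) :
    LinearIndependent K (Fin.cons f μ : Fin (m + 1) → M → K) := by
  have hμind : LinearIndependent K μ := by
    have := hgind.comp Fin.succ (Fin.succ_injective m)
    simpa [Function.comp] using this
  have hgind' := Fintype.linearIndependent_iff.mp hgind
  have hμind' := Fintype.linearIndependent_iff.mp hμind
  rw [Fintype.linearIndependent_iff]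
  intro c hc
  have hc' : ∀ z : M, c 0 * f z + ∑ i, c (Fin.succ i) * μ i z = 0 := by
    intro z
    have := congrFun hc z
    simpa [Fin.sum_univ_succ] using this
  have key : ∀ y, (c 0 * h y = 0) ∧
      ∀ i, c 0 * (b i * h' (J i) y) + c (Fin.succ i) * μ i y = 0 := by
    intro y
    have hd := hgind' (Fin.cons (c 0 * h y)
      (fun i => c 0 * (b i * h' (J i) y) + c (Fin.succ i) * μ i y)) ?_
    · exact ⟨by simpa using hd 0, fun i => by simpa using hd (Fin.succ i)⟩
    · funext x
      have h1 := hc' (x * y)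
      rw [heq] at h1
      simp only [hmul] at h1
      rw [mul_add, Finset.mul_sum] at h1
      simp only [Pi.zero_apply, Finset.sum_apply, Pi.smul_apply, smul_eq_mul]
      rw [Fin.sum_univ_succ]
      simp only [Fin.cons_zero, Fin.cons_succ]
      calc c 0 * h y * g x + ∑ i, (c 0 * (b i * h' (J i) y) + c (Fin.succ i) * μ i y) * μ i x
          = c 0 * (g x * h y) + ∑ i, (c 0 * (b i * μ i x * h' (J i) y)
              + c (Fin.succ i) * (μ i x * μ i y)) := by
            rw [mul_comm (c 0 * h y) (g x)]
            ring_nf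
            congr 1
            apply Finset.sum_congr rfl
            intros; ring
        _ = c 0 * (g x * h y) + (∑ i, c 0 * (b i * μ i x * h' (J i) y)
              + ∑ i, c (Fin.succ i) * (μ i x * μ i y)) := by
            rw [Finset.sum_add_distrib]
        _ = 0 := by linear_combination h1
  -- all the tail coefficients vanish
  have hcz : ∀ i, c (Fin.succ i) = 0 := by
    intro i
    obtain ⟨i', hi'mem, hi'ne⟩ := Finset.exists_mem_ne
      (lt_of_lt_of_le one_lt_two (hfib (J i))) i
    simp only [Finset.mem_filter, Finset.mem_univ, true_and] at hi'mem
    have hrel : ∀ y, b i' * c (Fin.succ i) * μ i y - b i * c (Fin.succ i') * μ i' y = 0 := by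
      intro y
      have e1 := (key y).2 i
      have e2 := (key y).2 i'
      rw [hi'mem] at e2
      linear_combination b i' * e1 - b i * e2
    have hv := hμind' (fun k => if k = i then b i' * c (Fin.succ i)
        else if k = i' then -(b i * c (Fin.succ i')) else 0) ?_
    · have := hv i
      simp only [if_pos rfl] at this
      exact (mul_eq_zero.mp this).resolve_left (hb i')
    · funext y
      simp only [Pi.zero_apply, Finset.sum_apply, Pi.smul_apply, smul_eq_mul]
      have split : ∀ k : Fin m,
          (if k = i then b i' * c (Fin.succ i) else if k = i' then -(b i * c (Fin.succ i')) else 0) * μ k y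
          = (if k = i then b i' * c (Fin.succ i) * μ k y else 0)
            + (if k = i' then -(b i * c (Fin.succ i')) * μ k y else 0) := by
        intro k
        by_cases h1 : k = i
        · subst h1
          simp [Ne.symm hi'ne]
        · by_cases h2 : k = i' <;> simp [h1, h2, hi'ne]
      rw [Finset.sum_congr rfl fun k _ => split k, Finset.sum_add_distrib]
      simp only [Finset.sum_ite_eq', Finset.mem_univ, if_pos]
      linear_combination hrel y
  -- head coefficient vanishes
  have hc0 : c 0 = 0 := by
    obtain ⟨z, hz⟩ : ∃ z, f z ≠ 0 := by
      by_contra hcon; push_neg at hcon; exact hf (funext hcon)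
    have := hc' z
    simp only [hcz, zero_mul, Finset.sum_const_zero, add_zero] at this
    exact (mul_eq_zero.mp this).resolve_right hz
  intro k
  refine Fin.cases ?_ ?_ k
  · exact hc0
  · exact hcz
end

section
/- Let M be a monoid, K a field, μ₁,...,μₘ : M → K distinct nonzero multiplicative functions, b₁,...,bₘ ∈ K all nonzero, and J : {1,...,m} → {1,...,n} a surjection whose fibers all have at least 2 elements. Suppose f, g, h, h₁,...,hₙ : M → K satisfy f(xy) = g(x)h(y) + Σᵢ₌₁ᵐ bᵢμᵢ(x)h_{J(i)}(y) for all x, y ∈ M, with f ≠ 0 and {g, μ₁,...,μₘ} linearly independent. Then h(e) ≠ 0, where e is the identity of M. -/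
/-- Under the hypotheses of the nondegenerate case of the Levi-Civita equation
(`f ≠ 0`, `{g, μ₁,…,μₘ}` linearly independent), we have `h(e) ≠ 0`. -/
theorem stmt_5 {M : Type*} [Monoid M] {K : Type*} [Field K] {m n : ℕ}
    (μ : Fin m → M → K)
    (hmul : ∀ i, ∀ x y : M, μ i (x * y) = μ i x * μ i y)
    (hdist : Function.Injective μ) (hne : ∀ i, μ i ≠ 0)
    (b : Fin m → K) (hb : ∀ i, b i ≠ 0)
    (J : Fin m → Fin n) (hJsurj : Function.Surjective J)
    (hfib : ∀ j, 2 ≤ (Finset.univ.filter fun i => J i = j).card)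
    (f g h : M → K) (h' : Fin n → M → K)
    (heq : ∀ x y, f (x * y) = g x * h y + ∑ i, b i * μ i x * h' (J i) y)
    (hf : f ≠ 0)
    (hgind : LinearIndependent K (Fin.cons g μ : Fin (m + 1) → M → K)) :
    h 1 ≠ 0 := by
  intro h1
  have hA : ∀ x, f x = ∑ i, b i * μ i x * h' (J i) 1 := by
    intro x
    have := heq x 1
    simpa [h1] using this
  have hli := Fintype.linearIndependent_iff.mp hgind
  have key : ∀ y i, h' (J i) y = h' (J i) 1 * μ i y := by
    intro y
    have hx : ∀ x, h y * g x
        + ∑ i, (b i * (h' (J i) y - h' (J i) 1 * μ i y)) * μ i x = 0 := by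
      intro x
      have e1 := heq x y
      have e2 := hA (x * y)
      have e3 : (∑ i, b i * μ i (x * y) * h' (J i) 1)
          = ∑ i, b i * (μ i x * μ i y) * h' (J i) 1 :=
        Finset.sum_congr rfl fun i _ => by rw [hmul]
      have e4 : g x * h y + ∑ i, b i * μ i x * h' (J i) y
          = ∑ i, b i * (μ i x * μ i y) * h' (J i) 1 := by
        rw [← e1, ← e3, e2]
      have e5 : (∑ i, (b i * (h' (J i) y - h' (J i) 1 * μ i y)) * μ i x)
          = (∑ i, b i * μ i x * h' (J i) y)
            - ∑ i, b i * (μ i x * μ i y) * h' (J i) 1 := by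
        rw [← Finset.sum_sub_distrib]
        exact Finset.sum_congr rfl fun i _ => by ring
      rw [e5]
      linear_combination e4
    set c : Fin (m + 1) → K :=
      Fin.cons (h y) (fun i => b i * (h' (J i) y - h' (J i) 1 * μ i y)) with hc
    have hsum : ∑ k, c k • (Fin.cons g μ : Fin (m + 1) → M → K) k = 0 := by
      funext x
      have := hx x
      simpa [hc, Fin.sum_univ_succ, Finset.sum_apply, Fin.cons_zero, Fin.cons_succ, smul_eq_mul] using this
    have hz := hli c hsum
    intro i
    have := hz i.succ
    simp only [hc, Fin.cons_succ] at this
    rcases mul_eq_zero.mp this with hbz | hsub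
    · exact absurd hbz (hb i)
    · exact sub_eq_zero.mp hsub
  have hj0 : ∀ j, h' j 1 = 0 := by
    intro j
    have hcard := hfib j
    obtain ⟨i₁, hi₁, i₂, hi₂, hne12⟩ := Finset.one_lt_card.mp (by omega : 1 < (Finset.univ.filter fun i => J i = j).card)
    simp only [Finset.mem_filter, Finset.mem_univ, true_and] at hi₁ hi₂
    by_contra hj
    apply hne12
    apply hdist
    funext y
    have k1 := key y i₁
    have k2 := key y i₂
    rw [hi₁] at k1
    rw [hi₂] at k2
    have : h' j 1 * μ i₁ y = h' j 1 * μ i₂ y := by rw [← k1, ← k2]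
    exact mul_left_cancel₀ hj this
  apply hf
  funext x
  have := hA x
  simp only [fun i => hj0 (J i), mul_zero, Finset.sum_const_zero] at this
  simpa using this
end

section
/- Let M be a monoid with identity e, K a field, μ₁,...,μₘ : M → K distinct nonzero multiplicative functions, b₁,...,bₘ ∈ K all nonzero, and J : {1,...,m} → {1,...,n} a surjection whose fibers all have at least 2 elements. Suppose f, g, h, h₁,...,hₙ : M → K satisfy f(xy) = g(x)h(y) + Σᵢ₌₁ᵐ bᵢμᵢ(x)h_{J(i)}(y) for all x, y ∈ M, with f ≠ 0, h(e) ≠ 0, and {g, μ₁,...,μₘ} linearly independent. Then there exist a nonzero multiplicative function χ : M → K with χ ≠ μᵢ for all i, constants a, b ∈ K \ {0} and c₁,...,cₙ ∈ K, such that f = abχ, h = aχ, hⱼ = a cⱼ χ for each j, and g = bχ − Σⱼ₌₁ⁿ cⱼ gⱼ, where gⱼ := Σ_{i ∈ J⁻¹({j})} bᵢμᵢ. -/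
/-- Nondegenerate case of the Levi-Civita equation: explicit solution formulas. -/
theorem stmt_6 {M : Type*} [Monoid M] {K : Type*} [Field K] {m n : ℕ}
    (μ : Fin m → M → K)
    (hmul : ∀ i, ∀ x y : M, μ i (x * y) = μ i x * μ i y)
    (hdist : Function.Injective μ) (hne : ∀ i, μ i ≠ 0)
    (b : Fin m → K) (hb : ∀ i, b i ≠ 0)
    (J : Fin m → Fin n) (hJsurj : Function.Surjective J)
    (hfib : ∀ j, 2 ≤ (Finset.univ.filter fun i => J i = j).card)
    (f g h : M → K) (h' : Fin n → M → K)
    (heq : ∀ x y, f (x * y) = g x * h y + ∑ i, b i * μ i x * h' (J i) y)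
    (hf : f ≠ 0) (hhe : h 1 ≠ 0)
    (hgind : LinearIndependent K (Fin.cons g μ : Fin (m + 1) → M → K)) :
    ∃ (χ : M → K) (a b' : K) (c : Fin n → K),
      (∀ x y, χ (x * y) = χ x * χ y) ∧ χ ≠ 0 ∧ (∀ i, χ ≠ μ i) ∧
      a ≠ 0 ∧ b' ≠ 0 ∧
      f = (fun x => a * b' * χ x) ∧
      h = (fun x => a * χ x) ∧
      (∀ j, h' j = fun x => a * c j * χ x) ∧
      g = (fun x => b' * χ x -
        ∑ j, c j * ∑ i ∈ Finset.univ.filter fun i => J i = j, b i * μ i x) := by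
  classical
  -- μ i 1 = 1
  have hμ1 : ∀ i, μ i 1 = 1 := by
    intro i
    have h1 := (hmul i 1 1)
    rw [mul_one] at h1
    have h2 : μ i 1 * (μ i 1 - 1) = 0 := by linear_combination -h1
    rcases mul_eq_zero.mp h2 with h0 | h0
    · exact absurd (funext fun x => by rw [← mul_one x, hmul, h0, mul_zero]; rfl) (hne i)
    · exact sub_eq_zero.mp h0
  -- linear independence in coefficient form
  have lin : ∀ (α : K) (β : Fin m → K),
      (∀ x, α * g x + ∑ i, β i * μ i x = 0) → α = 0 ∧ ∀ i, β i = 0 := by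
    intro α β h0
    have key := Fintype.linearIndependent_iff.mp hgind (Fin.cons α β) ?_
    · refine ⟨?_, fun i => ?_⟩
      · have := key 0; simpa using this
      · have := key i.succ; simpa using this
    · funext x
      have := h0 x
      simpa [Fin.sum_univ_succ, Finset.sum_apply] using this
  -- the master functional identity
  have key : ∀ y z x,
      (h 1 * h (y*z) - h y * h z) * g x +
        ∑ i, (b i * (h 1 * h' (J i) (y*z)
          - (h' (J i) y - h' (J i) 1 * μ i y) * h z
          - h 1 * μ i y * h' (J i) z)) * μ i x = 0 := by
    intro y z x
    have hA := heq x (y*z)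
    rw [show x*(y*z) = (x*y)*z from (mul_assoc x y z).symm] at hA
    have hB : f ((x*y)*z) = g (x*y) * h z + ∑ i, b i * (μ i x * μ i y) * h' (J i) z := by
      rw [heq (x*y) z]
      exact congrArg _ (Finset.sum_congr rfl fun i _ => by rw [hmul])
    have hC := heq x y
    have hD : f (x*y) = g (x*y) * h 1 + ∑ i, b i * (μ i x * μ i y) * h' (J i) 1 := by
      have := heq (x*y) 1
      rw [mul_one] at this
      rw [this]
      exact congrArg _ (Finset.sum_congr rfl fun i _ => by rw [hmul])
    have hsum : ∑ i, (b i * (h 1 * h' (J i) (y*z)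
          - (h' (J i) y - h' (J i) 1 * μ i y) * h z
          - h 1 * μ i y * h' (J i) z)) * μ i x
        = h 1 * (∑ i, b i * μ i x * h' (J i) (y*z))
          - (∑ i, b i * μ i x * h' (J i) y) * h z
          + (∑ i, b i * (μ i x * μ i y) * h' (J i) 1) * h z
          - h 1 * (∑ i, b i * (μ i x * μ i y) * h' (J i) z) := by
      rw [Finset.mul_sum, Finset.mul_sum, Finset.sum_mul, Finset.sum_mul,
        ← Finset.sum_sub_distrib, ← Finset.sum_add_distrib, ← Finset.sum_sub_distrib]
      exact Finset.sum_congr rfl fun i _ => by ring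
    rw [hsum]
    linear_combination h 1 * hB - h 1 * hA + h z * hC - h z * hD
  -- multiplicativity of h (up to the constant h 1)
  have hχmul : ∀ y z, h 1 * h (y*z) = h y * h z := by
    intro y z
    exact sub_eq_zero.mp (lin _ _ (key y z)).1
  have hβ0 : ∀ y z i, h 1 * h' (J i) (y*z)
      - (h' (J i) y - h' (J i) 1 * μ i y) * h z - h 1 * μ i y * h' (J i) z = 0 := by
    intro y z i
    have := (lin _ _ (key y z)).2 i
    exact (mul_eq_zero.mp this).resolve_left (hb i)
  -- each h' j is proportional to h
  have hfix : ∀ j z, h 1 * h' j z = h' j 1 * h z := by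
    intro j z
    obtain ⟨i, hi, i', hi', hii'⟩ := Finset.one_lt_card.mp (hfib j)
    have hji : J i = j := (Finset.mem_filter.mp hi).2
    have hji' : J i' = j := (Finset.mem_filter.mp hi').2
    have hμne : μ i ≠ μ i' := fun hc => hii' (hdist hc)
    obtain ⟨y, hy⟩ := Function.ne_iff.mp hμne
    have e1 := hβ0 y z i
    have e2 := hβ0 y z i'
    rw [hji] at e1
    rw [hji'] at e2
    have hd : (μ i y - μ i' y) * (h 1 * h' j z - h' j 1 * h z) = 0 := by
      linear_combination e2 - e1
    exact sub_eq_zero.mp ((mul_eq_zero.mp hd).resolve_left (sub_ne_zero.mpr hy))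
  -- the multiplicative function
  set χ : M → K := fun x => (h 1)⁻¹ * h x with hχdef
  have hscal : ∀ t : K, h 1 * ((h 1)⁻¹ * t) = t := fun t => by
    rw [← mul_assoc, mul_inv_cancel₀ hhe, one_mul]
  have hχm : ∀ x y, χ (x * y) = χ x * χ y := by
    intro x y
    have e := hχmul x y
    simp only [hχdef]
    rw [show (h 1)⁻¹ * h x * ((h 1)⁻¹ * h y)
        = (h 1)⁻¹ * ((h 1)⁻¹ * (h x * h y)) by ring, ← e,
      show (h 1)⁻¹ * ((h 1)⁻¹ * (h 1 * h (x*y)))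
        = (h 1)⁻¹ * h 1 * ((h 1)⁻¹ * h (x*y)) by ring,
      inv_mul_cancel₀ hhe, one_mul]
  have hχ1 : χ 1 = 1 := by
    simp only [hχdef]
    exact inv_mul_cancel₀ hhe
  have hχ0 : χ ≠ 0 := fun hc => by simp [hc] at hχ1
  -- each h' j is a multiple of χ
  have Hh' : ∀ j x, h' j x = h' j 1 * χ x := by
    intro j x
    apply mul_left_cancel₀ hhe
    rw [hfix j x]
    simp only [hχdef]
    rw [show h 1 * (h' j 1 * ((h 1)⁻¹ * h x))
        = h 1 * (h 1)⁻¹ * (h' j 1 * h x) by ring, mul_inv_cancel₀ hhe, one_mul]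
  -- f is proportional to χ
  have hfmul : ∀ x y, f (x*y) = f x * χ y := by
    intro x y
    have hE := heq x 1
    rw [mul_one] at hE
    have hS : ∑ i, b i * μ i x * h' (J i) y
        = (∑ i, b i * μ i x * h' (J i) 1) * χ y := by
      rw [Finset.sum_mul]
      refine Finset.sum_congr rfl fun i _ => ?_
      rw [Hh' (J i) y]; ring
    have hy : h y = h 1 * χ y := by
      simp only [hχdef]; rw [hscal]
    rw [heq x y, hS, hy, hE]; ring
  have hfx : ∀ x, f x = f 1 * χ x := fun x => by rw [← one_mul x, hfmul, one_mul]
  have hf1 : f 1 ≠ 0 := by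
    intro hc
    exact hf (funext fun x => by rw [hfx x, hc, zero_mul]; rfl)
  -- expansion of g (multiplied through by h 1)
  have hgH : ∀ x, h 1 * g x = f 1 * χ x - ∑ i, h' (J i) 1 * b i * μ i x := by
    intro x
    have hE := heq x 1
    rw [mul_one, hfx x] at hE
    have hS : ∑ i, h' (J i) 1 * b i * μ i x = ∑ i, b i * μ i x * h' (J i) 1 :=
      Finset.sum_congr rfl fun i _ => by ring
    rw [hS]
    linear_combination -hE
  refine ⟨χ, h 1, (h 1)⁻¹ * f 1, fun j => (h 1)⁻¹ * h' j 1, hχm, hχ0, ?_, hhe,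
    mul_ne_zero (inv_ne_zero hhe) hf1, ?_, ?_, ?_, ?_⟩
  · -- χ ≠ μ i₀
    intro i₀ hc
    have h0 : ∀ x, h 1 * g x
        + ∑ i, (h' (J i) 1 * b i - if i = i₀ then f 1 else 0) * μ i x = 0 := by
      intro x
      have hg := hgH x
      rw [hc] at hg
      have hsplit : ∑ i, (h' (J i) 1 * b i - if i = i₀ then f 1 else 0) * μ i x
          = (∑ i, h' (J i) 1 * b i * μ i x)
            - ∑ i, (if i = i₀ then f 1 * μ i x else 0) := by
        rw [← Finset.sum_sub_distrib]
        refine Finset.sum_congr rfl fun i _ => ?_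
        split_ifs <;> ring
      rw [hsplit, Finset.sum_ite_eq' Finset.univ i₀ fun i => f 1 * μ i x]
      simp only [Finset.mem_univ, if_true]
      linear_combination hg
    exact hhe (lin _ _ h0).1
  · -- f
    funext x
    rw [hfx x, show h 1 * ((h 1)⁻¹ * f 1) = f 1 from hscal (f 1)]
  · -- h
    funext x
    simp only [hχdef]
    rw [hscal]
  · -- h'
    intro j
    funext x
    rw [show h 1 * ((h 1)⁻¹ * h' j 1) = h' j 1 from hscal (h' j 1)]
    exact Hh' j x
  · -- g
    funext x
    have hT : ∑ j, ((h 1)⁻¹ * h' j 1) * ∑ i ∈ Finset.univ.filter fun i => J i = j,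
          b i * μ i x
        = ∑ i, (h 1)⁻¹ * h' (J i) 1 * b i * μ i x := by
      rw [← Finset.sum_fiberwise Finset.univ J fun i => (h 1)⁻¹ * h' (J i) 1 * b i * μ i x]
      refine Finset.sum_congr rfl fun j _ => ?_
      rw [Finset.mul_sum]
      refine Finset.sum_congr rfl fun i hi => ?_
      rw [(Finset.mem_filter.mp hi).2]
      ring
    rw [hT]
    apply mul_left_cancel₀ hhe
    rw [mul_sub, Finset.mul_sum]
    have hS : ∑ i, h 1 * ((h 1)⁻¹ * h' (J i) 1 * b i * μ i x)
        = ∑ i, h' (J i) 1 * b i * μ i x := by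
      refine Finset.sum_congr rfl fun i _ => ?_
      rw [show (h 1)⁻¹ * h' (J i) 1 * b i * μ i x
          = (h 1)⁻¹ * (h' (J i) 1 * b i * μ i x) by ring, hscal]
    rw [hS, show h 1 * ((h 1)⁻¹ * f 1 * χ x) = f 1 * χ x by
      rw [show (h 1)⁻¹ * f 1 * χ x = (h 1)⁻¹ * (f 1 * χ x) by ring, hscal]]
    exact hgH x
end

section
/- Let M be a monoid with identity e, K a field, μ₁,...,μₘ : M → K distinct nonzero multiplicative functions, b₁,...,bₘ ∈ K all nonzero, and J : {1,...,m} → {1,...,n} a surjection. Suppose g, h, h₁,...,hₙ : M → K satisfy g(x)h(y) + Σᵢ₌₁ᵐ bᵢμᵢ(x)h_{J(i)}(y) = 0 for all x, y ∈ M. Then either (i) h = 0 and hⱼ = 0 for every j ∈ {1,...,n}, or (ii) there exist c₁,...,cₙ ∈ K such that g = Σⱼ₌₁ⁿ cⱼ gⱼ and hⱼ = −cⱼ h for all j, where gⱼ := Σ_{i ∈ J⁻¹({j})} bᵢμᵢ. -/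
lemma key_indep {M : Type*} [Monoid M] {K : Type*} [Field K] {m : ℕ}
    (μ : Fin m → M → K)
    (hmul : ∀ i, ∀ x y : M, μ i (x * y) = μ i x * μ i y)
    (hdist : Function.Injective μ) (hne : ∀ i, μ i ≠ 0)
    (a : Fin m → K) (ha : ∀ x, ∑ i, a i * μ i x = 0) : ∀ i, a i = 0 := by
  have hone : ∀ i, μ i 1 = 1 := by
    intro i
    obtain ⟨x, hx⟩ := Function.ne_iff.mp (hne i)
    have hx' : μ i x ≠ 0 := by simpa using hx
    have h1 : μ i x = μ i x * μ i 1 := by rw [← hmul]; simp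
    field_simp at h1
    exact h1.symm
  let e : Fin m → (M →* K) := fun i =>
    { toFun := μ i, map_one' := hone i, map_mul' := hmul i }
  have einj : Function.Injective e := by
    intro i j hij
    apply hdist
    exact congrArg (fun f : M →* K => (f : M → K)) hij
  have li : LinearIndependent K (fun i => ((e i : M →* K) : M → K)) :=
    (linearIndependent_monoidHom M K).comp e einj
  have := Fintype.linearIndependent_iff.mp li a ?_
  · exact this
  · funext x
    simpa [Finset.sum_apply, e] using ha x

/-- Solutions of the Levi-Civita equation when `f = 0`: either `h = 0` and all
`hⱼ = 0`, or `g` is a combination of the `gⱼ` and `hⱼ = -cⱼ h`. -/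
theorem stmt_8 {M : Type*} [Monoid M] {K : Type*} [Field K] {m n : ℕ}
    (μ : Fin m → M → K)
    (hmul : ∀ i, ∀ x y : M, μ i (x * y) = μ i x * μ i y)
    (hdist : Function.Injective μ) (hne : ∀ i, μ i ≠ 0)
    (b : Fin m → K) (hb : ∀ i, b i ≠ 0)
    (J : Fin m → Fin n) (hJsurj : Function.Surjective J)
    (g h : M → K) (h' : Fin n → M → K)
    (heq : ∀ x y : M, g x * h y + ∑ i, b i * μ i x * h' (J i) y = 0) :
    (h = 0 ∧ ∀ j, h' j = 0) ∨
    ∃ c : Fin n → K,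
      g = (fun x => ∑ j, c j * ∑ i ∈ Finset.univ.filter fun i => J i = j, b i * μ i x) ∧
      ∀ j, h' j = fun y => -(c j * h y) := by
  by_cases hh : h = 0
  · left
    refine ⟨hh, fun j => ?_⟩
    funext y
    obtain ⟨i0, hi0⟩ := hJsurj j
    have key : ∀ i, b i * h' (J i) y = 0 := by
      apply key_indep μ hmul hdist hne
      intro x
      have hx := heq x y
      rw [hh] at hx
      simp only [Pi.zero_apply, mul_zero, zero_add] at hx
      rw [← hx]
      exact Finset.sum_congr rfl fun i _ => by ring
    have hk := key i0
    rw [hi0] at hk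
    simp only [Pi.zero_apply]
    exact (mul_eq_zero.mp hk).resolve_left (hb i0)
  · right
    obtain ⟨y0, hy0⟩ := Function.ne_iff.mp hh
    have hy0' : h y0 ≠ 0 := by simpa using hy0
    refine ⟨fun j => -(h' j y0 / h y0), ?_, ?_⟩
    · funext x
      have hg : g x = ∑ i, b i * μ i x * (-(h' (J i) y0 / h y0)) := by
        have hmc : (∑ i, b i * μ i x * (-(h' (J i) y0 / h y0))) * h y0 = g x * h y0 := by
          rw [Finset.sum_mul]
          have step : ∀ i : Fin m, b i * μ i x * (-(h' (J i) y0 / h y0)) * h y0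
              = -(b i * μ i x * h' (J i) y0) := by
            intro i; field_simp
          rw [Finset.sum_congr rfl fun i _ => step i, Finset.sum_neg_distrib]
          linear_combination -heq x y0
        exact (mul_right_cancel₀ hy0' hmc).symm
      rw [hg, ← Finset.sum_fiberwise_of_maps_to (fun i _ => Finset.mem_univ (J i))]
      refine Finset.sum_congr rfl fun j _ => ?_
      rw [Finset.mul_sum]
      refine Finset.sum_congr rfl fun i hi => ?_
      simp only [Finset.mem_filter] at hi
      rw [hi.2]; ring
    · intro j
      funext y
      obtain ⟨i0, hi0⟩ := hJsurj j
      have key : ∀ i, b i * (h' (J i) y - h' (J i) y0 / h y0 * h y) = 0 := by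
        apply key_indep μ hmul hdist hne
        intro x
        have hS : (∑ i, b i * μ i x * h' (J i) y) * h y0
            = (∑ i, b i * μ i x * h' (J i) y0) * h y := by
          linear_combination h y0 * heq x y - h y * heq x y0
        have expand : ∀ i : Fin m, b i * (h' (J i) y - h' (J i) y0 / h y0 * h y) * μ i x
            = b i * μ i x * h' (J i) y - b i * μ i x * h' (J i) y0 * (h y / h y0) := by
          intro i; field_simp
        calc ∑ i, b i * (h' (J i) y - h' (J i) y0 / h y0 * h y) * μ i x
            = ∑ i, (b i * μ i x * h' (J i) y - b i * μ i x * h' (J i) y0 * (h y / h y0)) :=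
              Finset.sum_congr rfl fun i _ => expand i
          _ = (∑ i, b i * μ i x * h' (J i) y)
              - (∑ i, b i * μ i x * h' (J i) y0) * (h y / h y0) := by
              rw [Finset.sum_sub_distrib, ← Finset.sum_mul]
          _ = 0 := by
              rw [sub_eq_zero, mul_div_assoc', eq_div_iff hy0']
              linear_combination hS
      have hk := key i0
      rw [hi0] at hk
      have h2 := (mul_eq_zero.mp hk).resolve_left (hb i0)
      linear_combination h2
end

section
/- Let M be a monoid with identity e, K a field, μ₁, μ₂ : M → K two distinct multiplicative functions, and h, h' : M → K functions with h(e) ≠ 0. If for both i = 1 and i = 2 the identity h'(yz) − h'(y)h(z)/h(e) + μᵢ(y)(h'(e)h(z)/h(e) − h'(z)) = 0 holds for all y, z ∈ M, then h' = (h'(e)/h(e))·h. -/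
/-- Two distinct multiplicative functions in equation (2.4) force `h'` to be
proportional to `h`. -/
theorem stmt_13 {M : Type*} [Monoid M] {K : Type*} [Field K]
    (μ₁ μ₂ : M → K)
    (hmul₁ : ∀ x y, μ₁ (x * y) = μ₁ x * μ₁ y)
    (hmul₂ : ∀ x y, μ₂ (x * y) = μ₂ x * μ₂ y)
    (hd : μ₁ ≠ μ₂)
    (h h' : M → K) (hhe : h 1 ≠ 0)
    (heq₁ : ∀ y z : M,
      h' (y * z) - h' y * h z / h 1 + μ₁ y * (h' 1 * h z / h 1 - h' z) = 0)
    (heq₂ : ∀ y z : M,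
      h' (y * z) - h' y * h z / h 1 + μ₂ y * (h' 1 * h z / h 1 - h' z) = 0) :
    h' = fun x => (h' 1 / h 1) * h x := by
  obtain ⟨y, hy⟩ := Function.ne_iff.mp hd
  funext z
  have e1 := heq₁ y z
  have e2 := heq₂ y z
  have key : (μ₁ y - μ₂ y) * (h' 1 * h z / h 1 - h' z) = 0 := by linear_combination e1 - e2
  have := (mul_eq_zero.mp key).resolve_left (sub_ne_zero_of_ne hy)
  have hz : h' z = h' 1 * h z / h 1 := by linear_combination -this
  rw [hz]; ring
end

section
/- Let M be a monoid with identity e, K a field, μ₁,...,μₘ : M → K distinct nonzero multiplicative functions, b₁,...,bₘ ∈ K all nonzero, and J : {1,...,m} → {1,...,n} a surjection whose fibers all have at least 2 elements. Suppose f, g, h, h₁,...,hₙ : M → K satisfy f(xy) = g(x)h(y) + Σᵢ₌₁ᵐ bᵢμᵢ(x)h_{J(i)}(y) for all x, y ∈ M, with f ≠ 0 and {g, μ₁,...,μₘ} linearly independent. Then f(e) ≠ 0. -/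
/-- Under the hypotheses of the nondegenerate case, `f(e) ≠ 0`. -/
theorem stmt_14 {M : Type*} [Monoid M] {K : Type*} [Field K] {m n : ℕ}
    (μ : Fin m → M → K)
    (hmul : ∀ i, ∀ x y : M, μ i (x * y) = μ i x * μ i y)
    (hdist : Function.Injective μ) (hne : ∀ i, μ i ≠ 0)
    (b : Fin m → K) (hb : ∀ i, b i ≠ 0)
    (J : Fin m → Fin n) (hJsurj : Function.Surjective J)
    (hfib : ∀ j, 2 ≤ (Finset.univ.filter fun i => J i = j).card)
    (f g h : M → K) (h' : Fin n → M → K)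
    (heq : ∀ x y, f (x * y) = g x * h y + ∑ i, b i * μ i x * h' (J i) y)
    (hf : f ≠ 0)
    (hgind : LinearIndependent K (Fin.cons g μ : Fin (m + 1) → M → K)) :
    f 1 ≠ 0 := by
  by_contra hf1
  -- representation of f via y = 1
  have rep : ∀ t, f t = g t * h 1 + ∑ i, b i * μ i t * h' (J i) 1 := by
    intro t; simpa using heq t 1
  -- key linear independence principle
  have key : ∀ (a : K) (c : Fin m → K),
      (∀ x, a * g x + ∑ i, c i * μ i x = 0) → a = 0 ∧ ∀ i, c i = 0 := by
    intro a c hc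
    have hsum : ∑ i, (Fin.cons a c : Fin (m + 1) → K) i •
        (Fin.cons g μ : Fin (m + 1) → M → K) i = 0 := by
      funext x
      have := hc x
      simpa [Finset.sum_apply, Fin.sum_univ_succ] using this
    have hz := Fintype.linearIndependent_iff.mp hgind _ hsum
    exact ⟨by simpa using hz 0, fun i => by simpa using hz i.succ⟩
  -- pairwise independence of the μ's
  have pair : ∀ (i i' : Fin m), i ≠ i' → ∀ (a a' : K),
      (∀ x, a * μ i x + a' * μ i' x = 0) → a = 0 ∧ a' = 0 := by
    intro i i' hii' a a' hc
    have hres := key 0 (fun k => (if k = i then a else 0) + (if k = i' then a' else 0)) ?_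
    · constructor
      · have := hres.2 i
        simpa [hii'] using this
      · have := hres.2 i'
        simpa [Ne.symm hii'] using this
    · intro x
      have : ∑ k, ((if k = i then a else 0) + (if k = i' then a' else 0)) * μ k x
          = a * μ i x + a' * μ i' x := by
        simp [add_mul, Finset.sum_add_distrib, ite_mul]
      rw [this, zero_mul, zero_add]
      exact hc x
  -- picking two indices in each fiber
  have pick : ∀ j, ∃ i i', i ≠ i' ∧ J i = j ∧ J i' = j := by
    intro j
    obtain ⟨i, hi, i', hi', hne'⟩ := Finset.one_lt_card.mp
      (lt_of_lt_of_le one_lt_two (hfib j))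
    simp only [Finset.mem_filter, Finset.mem_univ, true_and] at hi hi'
    exact ⟨i, i', hne', hi, hi'⟩
  -- the fundamental relation (*)
  have hstar : ∀ x y, h 1 * g (x * y) = g x * h y +
      ∑ i, (b i * h' (J i) y - b i * h' (J i) 1 * μ i y) * μ i x := by
    intro x y
    have e1 := heq x y
    have e2 := rep (x * y)
    have e3 : ∑ i, b i * μ i (x * y) * h' (J i) 1
        = ∑ i, (b i * h' (J i) 1 * μ i y) * μ i x :=
      Finset.sum_congr rfl fun i _ => by rw [hmul]; ring
    rw [e3] at e2
    have esplit : ∑ i, (b i * h' (J i) y - b i * h' (J i) 1 * μ i y) * μ i x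
        = (∑ i, b i * μ i x * h' (J i) y) - ∑ i, (b i * h' (J i) 1 * μ i y) * μ i x := by
      rw [← Finset.sum_sub_distrib]
      exact Finset.sum_congr rfl fun i _ => by ring
    rw [esplit]
    linear_combination e1 - e2
  by_cases hh1 : h 1 = 0
  · -- degenerate case: h 1 = 0 forces f = 0
    have main : ∀ y, h y = 0 ∧
        ∀ i, b i * h' (J i) y - b i * h' (J i) 1 * μ i y = 0 := by
      intro y
      apply key
      intro x
      have := hstar x y
      rw [hh1, zero_mul] at this
      linear_combination -this
    have hz1 : ∀ j, h' j 1 = 0 := by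
      intro j
      obtain ⟨i, i', hne', hji, hji'⟩ := pick j
      by_contra hα
      have e1 : ∀ y, h' j y = h' j 1 * μ i y := by
        intro y
        have h0 := (main y).2 i
        rw [hji] at h0
        have h1' : b i * (h' j y - h' j 1 * μ i y) = 0 := by linear_combination h0
        have h2' := (mul_eq_zero.mp h1').resolve_left (hb i)
        linear_combination h2'
      have e2 : ∀ y, h' j y = h' j 1 * μ i' y := by
        intro y
        have h0 := (main y).2 i'
        rw [hji'] at h0
        have h1' : b i' * (h' j y - h' j 1 * μ i' y) = 0 := by linear_combination h0
        have h2' := (mul_eq_zero.mp h1').resolve_left (hb i')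
        linear_combination h2'
      have : μ i = μ i' := by
        funext y
        have := (e1 y).symm.trans (e2 y)
        exact mul_left_cancel₀ hα this
      exact hne' (hdist this)
    have hzall : ∀ j y, h' j y = 0 := by
      intro j y
      obtain ⟨i, _, _, hji, _⟩ := pick j
      have := (main y).2 i
      rw [hji, hz1 j] at this
      have : b i * h' j y = 0 := by linear_combination this
      rcases mul_eq_zero.mp this with hc | hc
      · exact absurd hc (hb i)
      · exact hc
    apply hf
    funext x
    rw [rep x, hh1]
    simp [hzall]
  · -- nondegenerate case: h 1 ≠ 0
    -- abbreviate d i y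
    set d : Fin m → M → K :=
      fun i y => b i * h' (J i) y - b i * h' (J i) 1 * μ i y with hd
    have hstar' : ∀ x y, h 1 * g (x * y) = g x * h y + ∑ i, d i y * μ i x := hstar
    -- associativity consequences
    have assoc : ∀ y z, (h y * h z - h 1 * h (y * z) = 0) ∧
        ∀ i, d i y * h z + h 1 * (d i z * μ i y) - h 1 * d i (y * z) = 0 := by
      intro y z
      apply key
      intro x
      have A := hstar' (x * y) z
      have B := hstar' x y
      have C := hstar' x (y * z)
      rw [mul_assoc x y z] at A
      have eA : ∑ i, d i z * μ i (x * y) = ∑ i, (d i z * μ i y) * μ i x :=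
        Finset.sum_congr rfl fun i _ => by rw [hmul]; ring
      rw [eA] at A
      have esplit : ∑ i, (d i y * h z + h 1 * (d i z * μ i y) - h 1 * d i (y * z)) * μ i x
          = (∑ i, d i y * μ i x) * h z + h 1 * (∑ i, (d i z * μ i y) * μ i x)
            - h 1 * (∑ i, d i (y * z) * μ i x) := by
        rw [Finset.sum_mul, Finset.mul_sum, Finset.mul_sum, ← Finset.sum_add_distrib,
          ← Finset.sum_sub_distrib]
        exact Finset.sum_congr rfl fun i _ => by ring
      rw [esplit]
      linear_combination h 1 * C - h 1 * A - h z * B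
    -- key relation between h' j and h
    have hkey : ∀ j z, h 1 * h' j z = h' j 1 * h z := by
      intro j z
      obtain ⟨i, i', hne', hji, hji'⟩ := pick j
      have hy : ∀ y,
          (h 1 * (b i' * d i z) + h 1 * (b i * b i' * h' j 1) * μ i z
              - (b i * b i' * h' j 1) * h z) * μ i y
          + ((b i * b i' * h' j 1) * h z - h 1 * (b i * d i' z)
              - h 1 * (b i * b i' * h' j 1) * μ i' z) * μ i' y = 0 := by
        intro y
        have c1 := (assoc y z).2 i
        have c2 := (assoc y z).2 i'
        simp only [hd] at c1 c2
        rw [hji] at c1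
        rw [hji'] at c2
        rw [hmul i y z] at c1
        rw [hmul i' y z] at c2
        have hdz : d i z = b i * h' j z - b i * h' j 1 * μ i z := by
          simp only [hd]; rw [hji]
        have hdz' : d i' z = b i' * h' j z - b i' * h' j 1 * μ i' z := by
          simp only [hd]; rw [hji']
        rw [hdz, hdz']
        linear_combination b i' * c1 - b i * c2
      have hA := (pair i i' hne' _ _ hy).1
      have hcancel : b i * b i' * (h 1 * h' j z) = b i * b i' * (h' j 1 * h z) := by
        have hdz : d i z = b i * h' j z - b i * h' j 1 * μ i z := by
          simp only [hd]; rw [hji]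
        rw [hdz] at hA
        linear_combination hA
      exact mul_left_cancel₀ (mul_ne_zero (hb i) (hb i')) hcancel
    -- conclude: h 1 * f (x * y) = h y * f x
    have hfxy : ∀ x y, h 1 * f (x * y) = h y * f x := by
      intro x y
      have e1 := heq x y
      have e2 := rep x
      have e4 : h 1 * (∑ i, b i * μ i x * h' (J i) y)
          = (∑ i, b i * μ i x * h' (J i) 1) * h y := by
        rw [Finset.mul_sum, Finset.sum_mul]
        exact Finset.sum_congr rfl fun i _ => by
          linear_combination (b i * μ i x) * hkey (J i) y
      linear_combination h 1 * e1 - h y * e2 + e4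
    apply hf
    funext y
    have := hfxy 1 y
    rw [one_mul, hf1, mul_zero] at this
    exact (mul_eq_zero.mp this).resolve_left hh1
end

section
/- Let M be a monoid, K a field, μ₁,...,μₘ : M → K distinct nonzero multiplicative functions, b₁,...,bₘ ∈ K all nonzero, and J : {1,...,m} → {1,...,n} a surjection whose fibers all have at least 2 elements. Suppose f, g, h, h₁,...,hₙ : M → K satisfy f(xy) = g(x)h(y) + Σᵢ₌₁ᵐ bᵢμᵢ(x)h_{J(i)}(y) for all x, y ∈ M, with f ≠ 0, and suppose there exist constants v₁,...,vₙ ∈ K such that g = Σⱼ₌₁ⁿ vⱼ gⱼ, where gⱼ := Σ_{i ∈ J⁻¹({j})} bᵢμᵢ. Then a contradiction follows; i.e., no such solution exists (f must be 0). -/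
/-- Case 2 of Proposition 5: if `g` is a combination of the `gⱼ` with
fiber-constant coefficients, then no solution with `f ≠ 0` exists. -/
theorem stmt_15 {M : Type*} [Monoid M] {K : Type*} [Field K] {m n : ℕ}
    (μ : Fin m → M → K)
    (hmul : ∀ i, ∀ x y : M, μ i (x * y) = μ i x * μ i y)
    (hdist : Function.Injective μ) (hne : ∀ i, μ i ≠ 0)
    (b : Fin m → K) (hb : ∀ i, b i ≠ 0)
    (J : Fin m → Fin n) (hJsurj : Function.Surjective J)
    (hfib : ∀ j, 2 ≤ (Finset.univ.filter fun i => J i = j).card)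
    (f g h : M → K) (h' : Fin n → M → K)
    (heq : ∀ x y, f (x * y) = g x * h y + ∑ i, b i * μ i x * h' (J i) y)
    (hf : f ≠ 0)
    (v : Fin n → K)
    (hg : g = fun x => ∑ j, v j * ∑ i ∈ Finset.univ.filter fun i => J i = j, b i * μ i x) :
    False := by
  classical
  -- each μ i sends 1 to 1
  have hone : ∀ i, μ i 1 = 1 := by
    intro i
    have h2 : μ i 1 * μ i 1 = μ i 1 := by
      rw [← hmul i 1 1, one_mul]
    have h2' : μ i 1 * (μ i 1 - 1) = 0 := by ring_nf; linear_combination h2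
    rcases mul_eq_zero.mp h2' with h0 | h1
    · exfalso
      apply hne i
      funext x
      have := hmul i x 1
      rw [mul_one, h0, mul_zero] at this
      simpa using this
    · exact sub_eq_zero.mp h1
  set φ : Fin m → (M →* K) := fun i =>
    { toFun := μ i, map_one' := hone i, map_mul' := hmul i } with hφ
  have hφcoe : ∀ i, ⇑(φ i) = μ i := fun i => rfl
  have hφinj : Function.Injective φ := by
    intro i i' hii'
    apply hdist
    rw [← hφcoe, ← hφcoe, hii']
  have indep : ∀ c : Fin m → K, (∀ x, ∑ i, c i * μ i x = 0) → ∀ i, c i = 0 := by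
    intro c hc
    have li : LinearIndependent K (fun i => ⇑(φ i)) :=
      (linearIndependent_monoidHom M K).comp φ hφinj
    refine Fintype.linearIndependent_iff.mp li c ?_
    funext x
    have := hc x
    simpa [hφcoe, Finset.sum_apply] using this
  set H : Fin m → M → K := fun i y => v (J i) * h y + h' (J i) y with hH
  have heq' : ∀ x y, f (x * y) = ∑ i, b i * μ i x * H i y := by
    intro x y
    rw [heq x y, hg]
    have hgx : (∑ j, v j * ∑ i ∈ Finset.univ.filter fun i => J i = j, b i * μ i x)
        = ∑ i, v (J i) * (b i * μ i x) := by
      rw [← Finset.sum_fiberwise Finset.univ J (fun i => v (J i) * (b i * μ i x))]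
      refine Finset.sum_congr rfl fun j _ => ?_
      rw [Finset.mul_sum]
      refine Finset.sum_congr rfl fun i hi => ?_
      rw [Finset.mem_filter] at hi
      rw [hi.2]
    simp only
    rw [hgx, Finset.sum_mul, ← Finset.sum_add_distrib]
    refine Finset.sum_congr rfl fun i _ => ?_
    simp only [hH]
    ring
  have stepA : ∀ y z i, H i (y * z) = μ i y * H i z := by
    intro y z i
    have hc : ∀ x, ∑ k, (b k * (H k (y * z) - μ k y * H k z)) * μ k x = 0 := by
      intro x
      have key : ∑ k, b k * μ k x * H k (y * z) = ∑ k, b k * (μ k x * μ k y) * H k z := by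
        rw [← heq' x (y * z), ← mul_assoc, heq' (x * y) z]
        exact Finset.sum_congr rfl fun k _ => by rw [hmul]
      calc ∑ k, (b k * (H k (y * z) - μ k y * H k z)) * μ k x
          = (∑ k, b k * μ k x * H k (y * z)) - ∑ k, b k * (μ k x * μ k y) * H k z := by
            rw [← Finset.sum_sub_distrib]
            exact Finset.sum_congr rfl fun k _ => by ring
        _ = 0 := by rw [key, sub_self]
    have := indep _ hc i
    have h3 : H i (y * z) - μ i y * H i z = 0 := by
      rcases mul_eq_zero.mp this with h4 | h4
      · exact absurd h4 (hb i)
      · exact h4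
    exact sub_eq_zero.mp h3
  have stepB : ∀ i, H i 1 = 0 := by
    intro i
    have hcard : 1 < (Finset.univ.filter fun k => J k = J i).card :=
      lt_of_lt_of_le one_lt_two (hfib (J i))
    obtain ⟨i', hi'mem, hne'⟩ := Finset.exists_mem_ne hcard i
    have hJ : J i' = J i := (Finset.mem_filter.mp hi'mem).2
    have hHeq : H i' = H i := by funext y; simp only [hH, hJ]
    have h1 : ∀ y, H i y = μ i y * H i 1 := fun y => by
      have := stepA y 1 i; rwa [mul_one] at this
    have h2 : ∀ y, H i y = μ i' y * H i 1 := fun y => by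
      have := stepA y 1 i'
      rw [mul_one, hHeq] at this
      exact this
    set c : Fin m → K := fun k =>
      (if k = i then H i 1 else 0) + (if k = i' then -(H i 1) else 0) with hcdef
    have hc : ∀ x, ∑ k, c k * μ k x = 0 := by
      intro x
      have : ∑ k, c k * μ k x
          = (∑ k, if k = i then H i 1 * μ k x else 0)
            + ∑ k, if k = i' then -(H i 1) * μ k x else 0 := by
        rw [← Finset.sum_add_distrib]
        refine Finset.sum_congr rfl fun k _ => ?_
        simp only [hcdef]
        split_ifs <;> ring
      rw [this, Finset.sum_ite_eq' Finset.univ i (fun k => H i 1 * μ k x),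
        Finset.sum_ite_eq' Finset.univ i' (fun k => -(H i 1) * μ k x)]
      simp only [Finset.mem_univ, if_true]
      have e1 := h1 x
      have e2 := h2 x
      linear_combination e2 - e1
    have hci := indep c hc i
    have hcival : c i = H i 1 := by simp [hcdef, (Ne.symm hne' : i ≠ i')]
    exact hcival.symm.trans hci
  apply hf
  funext x
  have := heq' x 1
  rw [mul_one] at this
  rw [this]
  refine Finset.sum_eq_zero fun i _ => ?_
  rw [stepB i, mul_zero]
end

section
/- Let M be a monoid, K a field, and let f, g, h, h₁,...,hₙ, g₁,...,gₙ : M → K satisfy f(xy) = g(x)h(y) + Σⱼ₌₁ⁿ gⱼ(x)hⱼ(y) for all x, y ∈ M, where each gⱼ = Σ_{i=nⱼ}^{mⱼ} bᵢμᵢ with μ₁,...,μₘ distinct nonzero multiplicative functions partitioned into n consecutive blocks each of size at least 2, and all bᵢ ≠ 0. If h = 0, then f = 0 and hⱼ = 0 for all j. -/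
/-- If `h = 0` in the Levi-Civita equation with each `gⱼ` a block sum of at least
two distinct nonzero multiplicative functions (blocks consecutive), then `f = 0`
and all `hⱼ = 0`. -/
theorem stmt_18 {M : Type*} [Monoid M] {K : Type*} [Field K] {m n : ℕ}
    (μ : Fin m → M → K)
    (hmul : ∀ i, ∀ x y : M, μ i (x * y) = μ i x * μ i y)
    (hdist : Function.Injective μ) (hne : ∀ i, μ i ≠ 0)
    (b : Fin m → K) (hb : ∀ i, b i ≠ 0)
    (J : Fin m → Fin n) (hJsurj : Function.Surjective J) (hJmono : Monotone J)
    (hfib : ∀ j, 2 ≤ (Finset.univ.filter fun i => J i = j).card)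
    (gj : Fin n → M → K)
    (hgj : ∀ j, gj j = fun x => ∑ i ∈ Finset.univ.filter fun i => J i = j, b i * μ i x)
    (f g h : M → K) (h' : Fin n → M → K)
    (heq : ∀ x y, f (x * y) = g x * h y + ∑ j, gj j x * h' j y)
    (hh : h = 0) :
    f = 0 ∧ ∀ j, h' j = 0 := by
  subst hh
  have h1 : ∀ i, μ i 1 = 1 := by
    intro i
    obtain ⟨x, hx⟩ := Function.ne_iff.mp (hne i)
    have hx1 : μ i x * μ i 1 = μ i x * 1 := by
      rw [← hmul i x 1, mul_one, mul_one]
    exact mul_left_cancel₀ hx hx1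
  set φ : Fin m → (M →* K) := fun i =>
    { toFun := μ i, map_one' := h1 i, map_mul' := hmul i } with hφ
  have hφinj : Function.Injective φ := by
    intro i i' hii
    exact hdist (congrArg (fun (ψ : M →* K) => (ψ : M → K)) hii)
  have li : LinearIndependent K (fun i => (φ i : M → K)) :=
    (linearIndependent_monoidHom M K).comp φ hφinj
  have hsum : ∀ (x : M) (F : Fin n → K),
      ∑ j, gj j x * F j = ∑ i, b i * μ i x * F (J i) := by
    intro x F
    rw [← Finset.sum_fiberwise Finset.univ J (fun i => b i * μ i x * F (J i))]
    refine Finset.sum_congr rfl fun j _ => ?_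
    rw [hgj, Finset.sum_mul]
    refine Finset.sum_congr rfl fun i hi => ?_
    rw [Finset.mem_filter] at hi
    rw [hi.2]
  have heq' : ∀ x y, f (x * y) = ∑ i, b i * μ i x * h' (J i) y := by
    intro x y
    rw [heq x y, Pi.zero_apply, mul_zero, zero_add, hsum]
  have key : ∀ i (y z : M), μ i y * h' (J i) z = h' (J i) (y * z) := by
    intro i y z
    have hzero : (∑ i, (b i * (μ i y * h' (J i) z - h' (J i) (y * z))) • (φ i : M → K)) = 0 := by
      funext x
      simp only [Finset.sum_apply, Pi.smul_apply, smul_eq_mul, Pi.zero_apply]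
      have e1 := heq' (x * y) z
      have e2 := heq' x (y * z)
      rw [mul_assoc] at e1
      have e3 : ∑ i, b i * μ i (x * y) * h' (J i) z = ∑ i, b i * μ i x * h' (J i) (y * z) :=
        e1.symm.trans e2
      have e4 : ∀ i, b i * μ i (x * y) * h' (J i) z
          = (b i * (μ i y * h' (J i) z)) * μ i x := by
        intro i; rw [hmul]; ring
      have e5 : ∀ i, b i * μ i x * h' (J i) (y * z)
          = (b i * h' (J i) (y * z)) * μ i x := by
        intro i; ring
      simp only [e4, e5] at e3
      have : ∑ i, ((b i * (μ i y * h' (J i) z)) * μ i x - (b i * h' (J i) (y * z)) * μ i x) = 0 := by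
        rw [Finset.sum_sub_distrib, e3, sub_self]
      rw [← this]
      refine Finset.sum_congr rfl fun i _ => ?_
      show (b i * (μ i y * h' (J i) z - h' (J i) (y * z))) * μ i x = _
      ring
    have hc := Fintype.linearIndependent_iff.mp li _ hzero i
    have h0 : μ i y * h' (J i) z - h' (J i) (y * z) = 0 :=
      (mul_eq_zero.mp hc).resolve_left (hb i)
    exact sub_eq_zero.mp h0
  have hj0 : ∀ j, h' j = 0 := by
    intro j
    by_contra hj
    obtain ⟨z, hz⟩ := Function.ne_iff.mp hj
    rw [Pi.zero_apply] at hz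
    obtain ⟨i₁, i₂, hi₁, hi₂, hii⟩ := Finset.one_lt_card_iff.mp (hfib j)
    rw [Finset.mem_filter] at hi₁ hi₂
    have hμ : μ i₁ = μ i₂ := by
      funext y
      have k1 := key i₁ y z
      have k2 := key i₂ y z
      rw [hi₁.2] at k1
      rw [hi₂.2] at k2
      exact mul_right_cancel₀ hz (k1.trans k2.symm)
    exact hii (hdist hμ)
  refine ⟨?_, hj0⟩
  funext x
  have := heq' x 1
  rw [mul_one] at this
  rw [this]
  simp [hj0]
end
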